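/- Let s, r, b, c > 0. Then the statement '(for all real x₁, x₂, x₃: V₃(x) > c² implies V̇₃(x) < 0)' holds if and only if c² ≥ 4sr² and at least one of the following holds: (i) b < 2s and b < 2; (ii) (b−1)c² ≥ s·b²·r² and b < 2s; (iii) (b−s)c² ≥ b²·r² and b < 2; (iv) (b−1)c² ≥ s·b²·r² and (b−s)c² ≥ b²·r². (Quantifier-free equivalent of the Lyapunov decrease condition for the elliptical Lyapunov-like function V₃; hence Sparrow's bounds are exact with respect to the level sets of V₃.) -/

import Mathlib

set_option maxHeartbeats 1000000 in
private lemma lorenz_aux (s r b c x₁ x₂ x₃ : ℝ) (hs : 0 < s) (hr : 0 < r) (hb : 0 < b)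
    (h1 : c ^ 2 ≥ 4 * s * r ^ 2)
    (hg1 : b < 2 * s ∨ (b - s) * c ^ 2 ≥ b ^ 2 * r ^ 2)
    (hg2 : b < 2 ∨ (b - 1) * c ^ 2 ≥ s * b ^ 2 * r ^ 2)
    (hW : r * x₁ ^ 2 + x₂ ^ 2 + b * (x₃ - r) ^ 2 ≤ b * r ^ 2) :
    r * x₁ ^ 2 + s * x₂ ^ 2 + s * (x₃ - 2 * r) ^ 2 ≤ c ^ 2 := by
  have hsq : (x₃ - r) ^ 2 ≤ r ^ 2 := by nlinarith [sq_nonneg x₁, sq_nonneg x₂]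
  have ht0 : 0 ≤ x₃ := by nlinarith [sq_nonneg x₃, hr]
  have ht2 : x₃ ≤ 2 * r := by nlinarith [sq_nonneg x₃, hr]
  have h2r : 0 ≤ 2 * r - x₃ := by linarith
  rcases le_total s 1 with hs1 | hs1
  · have hle : r * x₁ ^ 2 + s * x₂ ^ 2 + s * (x₃ - 2 * r) ^ 2
        ≤ (b * r ^ 2 - b * (x₃ - r) ^ 2) + s * (x₃ - 2 * r) ^ 2 := by
      nlinarith [mul_nonneg (sub_nonneg.mpr hs1) (sq_nonneg x₂)]
    rcases hg1 with hA | hP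
    · have hg : (b * r ^ 2 - b * (x₃ - r) ^ 2) + s * (x₃ - 2 * r) ^ 2 ≤ 4 * s * r ^ 2 := by
        nlinarith [mul_nonneg (mul_nonneg ht0 h2r) (by nlinarith : (0:ℝ) ≤ (4 * s - 2 * b) * r),
          mul_nonneg (sq_nonneg x₃) (by positivity : (0:ℝ) ≤ 2 * s * r), hr]
      linarith
    · have hbs : 0 < b - s := by nlinarith [mul_pos (mul_pos hb hb) (mul_pos hr hr)]
      have hg : (b * r ^ 2 - b * (x₃ - r) ^ 2) + s * (x₃ - 2 * r) ^ 2 ≤ c ^ 2 := by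
        rw [← mul_le_mul_iff_right₀ hbs]
        have key : (b - s) * ((b * r ^ 2 - b * (x₃ - r) ^ 2) + s * (x₃ - 2 * r) ^ 2)
            = b ^ 2 * r ^ 2 - ((b - s) * x₃ - (b - 2 * s) * r) ^ 2 := by ring
        rw [key]
        linarith [sq_nonneg ((b - s) * x₃ - (b - 2 * s) * r), hP]
      linarith
  · have hle : r * x₁ ^ 2 + s * x₂ ^ 2 + s * (x₃ - 2 * r) ^ 2
        ≤ s * (b * r ^ 2 - b * (x₃ - r) ^ 2) + s * (x₃ - 2 * r) ^ 2 := by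
      nlinarith [mul_nonneg (mul_nonneg (sub_nonneg.mpr hs1) hr.le) (sq_nonneg x₁),
        mul_nonneg hs.le (sub_nonneg.mpr hW)]
    rcases hg2 with hA | hP
    · have hg : s * (b * r ^ 2 - b * (x₃ - r) ^ 2) + s * (x₃ - 2 * r) ^ 2 ≤ 4 * s * r ^ 2 := by
        nlinarith [mul_nonneg (mul_nonneg (mul_nonneg ht0 h2r) (by nlinarith : (0:ℝ) ≤ (4 - 2 * b) * r)) hs.le,
          mul_nonneg (mul_nonneg (sq_nonneg x₃) (by positivity : (0:ℝ) ≤ 2 * r)) hs.le, hr]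
      linarith
    · have hbs : 0 < b - 1 := by nlinarith [mul_pos (mul_pos (mul_pos hs hb) hb) (mul_pos hr hr)]
      have hg : s * (b * r ^ 2 - b * (x₃ - r) ^ 2) + s * (x₃ - 2 * r) ^ 2 ≤ c ^ 2 := by
        rw [← mul_le_mul_iff_right₀ hbs]
        have key : (b - 1) * (s * (b * r ^ 2 - b * (x₃ - r) ^ 2) + s * (x₃ - 2 * r) ^ 2)
            = s * b ^ 2 * r ^ 2 - s * ((b - 1) * x₃ - (b - 2) * r) ^ 2 := by ring
        rw [key]
        linarith [mul_nonneg hs.le (sq_nonneg ((b - 1) * x₃ - (b - 2) * r)), hP]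
      linarith

/-- Quantifier-free equivalent of the Lyapunov decrease condition for the elliptical
Lyapunov-like function `V₃(x) = r·x₁² + s·x₂² + s·(x₃−2r)²` of the Lorenz system. -/
theorem lorenz_ellipse_bound_qe
    (s r b c : ℝ) (hs : 0 < s) (hr : 0 < r) (hb : 0 < b) (hc : 0 < c) :
    (∀ x₁ x₂ x₃ : ℝ,
        r * x₁ ^ 2 + s * x₂ ^ 2 + s * (x₃ - 2 * r) ^ 2 > c ^ 2 →
        2 * r * x₁ * s * (x₂ - x₁) + 2 * s * x₂ * (r * x₁ - x₂ - x₁ * x₃)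
          + 2 * s * (x₃ - 2 * r) * (x₁ * x₂ - b * x₃) < 0)
    ↔ (c ^ 2 ≥ 4 * s * r ^ 2 ∧
        ((b < 2 * s ∧ b < 2) ∨
         ((b - 1) * c ^ 2 ≥ s * b ^ 2 * r ^ 2 ∧ b < 2 * s) ∨
         ((b - s) * c ^ 2 ≥ b ^ 2 * r ^ 2 ∧ b < 2) ∨
         ((b - 1) * c ^ 2 ≥ s * b ^ 2 * r ^ 2 ∧ (b - s) * c ^ 2 ≥ b ^ 2 * r ^ 2))) := by
  constructor
  · intro h
    have h1 : c ^ 2 ≥ 4 * s * r ^ 2 := by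
      by_contra hcon
      push_neg at hcon
      have := h 0 0 0 (by nlinarith)
      nlinarith
    have h2 : b < 2 * s ∨ (b - s) * c ^ 2 ≥ b ^ 2 * r ^ 2 := by
      rcases lt_or_ge b (2 * s) with hb2 | hb2
      · exact Or.inl hb2
      · right
        have hbs : 0 < b - s := by nlinarith
        have hb2s : 0 ≤ b - 2 * s := by linarith
        set t : ℝ := (b - 2 * s) * r / (b - s) with ht
        set A : ℝ := b ^ 2 * (b - 2 * s) * r / (b - s) ^ 2 with hA
        have hA0 : 0 ≤ A := by rw [hA]; positivity
        set x : ℝ := Real.sqrt A with hx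
        have hx2 : x ^ 2 = A := Real.sq_sqrt hA0
        by_contra hcon
        push_neg at hcon
        have hV : r * x ^ 2 + s * (0:ℝ) ^ 2 + s * (t - 2 * r) ^ 2 > c ^ 2 := by
          rw [hx2, hA, ht]
          rw [gt_iff_lt, ← sub_pos]
          have e : r * (b ^ 2 * (b - 2 * s) * r / (b - s) ^ 2) + s * (0:ℝ) ^ 2
              + s * ((b - 2 * s) * r / (b - s) - 2 * r) ^ 2 - c ^ 2
              = (b ^ 2 * r ^ 2 - (b - s) * c ^ 2) / (b - s) := by
            field_simp
            ring
          rw [e]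
          exact div_pos (by linarith) hbs
        have hD := h x 0 t hV
        have e2 : 2 * r * x * s * (0 - x) + 2 * s * 0 * (r * x - 0 - x * t)
            + 2 * s * (t - 2 * r) * (x * 0 - b * t)
            = -2 * r * s * x ^ 2 - 2 * s * (t - 2 * r) * (b * t) := by ring
        rw [e2, hx2, hA, ht] at hD
        have e3 : -2 * r * s * (b ^ 2 * (b - 2 * s) * r / (b - s) ^ 2)
            - 2 * s * ((b - 2 * s) * r / (b - s) - 2 * r) * (b * ((b - 2 * s) * r / (b - s))) = 0 := by
          field_simp
          ring
        rw [e3] at hD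
        exact absurd hD (lt_irrefl 0)
    have h3 : b < 2 ∨ (b - 1) * c ^ 2 ≥ s * b ^ 2 * r ^ 2 := by
      rcases lt_or_ge b 2 with hb2 | hb2
      · exact Or.inl hb2
      · right
        have hbs : 0 < b - 1 := by nlinarith
        have hb2s : 0 ≤ b - 2 := by linarith
        set t : ℝ := (b - 2) * r / (b - 1) with ht
        set A : ℝ := b ^ 2 * (b - 2) * r ^ 2 / (b - 1) ^ 2 with hA
        have hA0 : 0 ≤ A := by rw [hA]; positivity
        set x : ℝ := Real.sqrt A with hx
        have hx2 : x ^ 2 = A := Real.sq_sqrt hA0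
        by_contra hcon
        push_neg at hcon
        have hV : r * (0:ℝ) ^ 2 + s * x ^ 2 + s * (t - 2 * r) ^ 2 > c ^ 2 := by
          rw [hx2, hA, ht]
          rw [gt_iff_lt, ← sub_pos]
          have e : r * (0:ℝ) ^ 2 + s * (b ^ 2 * (b - 2) * r ^ 2 / (b - 1) ^ 2)
              + s * ((b - 2) * r / (b - 1) - 2 * r) ^ 2 - c ^ 2
              = (s * b ^ 2 * r ^ 2 - (b - 1) * c ^ 2) / (b - 1) := by
            field_simp
            ring
          rw [e]
          exact div_pos (by linarith) hbs
        have hD := h 0 x t hV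
        have e2 : 2 * r * 0 * s * (x - 0) + 2 * s * x * (r * 0 - x - 0 * t)
            + 2 * s * (t - 2 * r) * (0 * x - b * t)
            = -2 * s * x ^ 2 - 2 * s * (t - 2 * r) * (b * t) := by ring
        rw [e2, hx2, hA, ht] at hD
        have e3 : -2 * s * (b ^ 2 * (b - 2) * r ^ 2 / (b - 1) ^ 2)
            - 2 * s * ((b - 2) * r / (b - 1) - 2 * r) * (b * ((b - 2) * r / (b - 1))) = 0 := by
          field_simp
          ring
        rw [e3] at hD
        exact absurd hD (lt_irrefl 0)
    refine ⟨h1, ?_⟩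
    rcases h2 with h2 | h2 <;> rcases h3 with h3 | h3
    · exact Or.inl ⟨h2, h3⟩
    · exact Or.inr (Or.inl ⟨h3, h2⟩)
    · exact Or.inr (Or.inr (Or.inl ⟨h2, h3⟩))
    · exact Or.inr (Or.inr (Or.inr ⟨h3, h2⟩))
  · rintro ⟨h1, hcase⟩
    have hg1 : b < 2 * s ∨ (b - s) * c ^ 2 ≥ b ^ 2 * r ^ 2 := by tauto
    have hg2 : b < 2 ∨ (b - 1) * c ^ 2 ≥ s * b ^ 2 * r ^ 2 := by tauto
    intro x₁ x₂ x₃ hV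
    by_contra hD
    push_neg at hD
    have hW : r * x₁ ^ 2 + x₂ ^ 2 + b * (x₃ - r) ^ 2 ≤ b * r ^ 2 := by nlinarith
    have := lorenz_aux s r b c x₁ x₂ x₃ hs hr hb h1 hg1 hg2 hW
    linarith
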